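/- For every integer n ≥ 0 and every real x > 0, the quantity ϝ_n(x) := 2n/x + i_{n+1}(x)/i_n(x) − k_{n+1}(x)/k_n(x) is strictly negative. -/

import Mathlib

open Real Finset

/-- Modified spherical Bessel function of the second kind `k_n`, explicit closed form. -/
noncomputable def kBes (n : ℕ) (x : ℝ) : ℝ :=
  (Real.exp (-x) / x) *
    ∑ l ∈ Finset.range (n + 1),
      (Nat.factorial (n + l) : ℝ) /
        ((Nat.factorial l : ℝ) * (Nat.factorial (n - l) : ℝ) * (2 * x) ^ l)

/-- Modified spherical Bessel function of the first kind `i_n`, explicit closed form. -/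
noncomputable def iBes (n : ℕ) (x : ℝ) : ℝ :=
  (1 / (2 * x)) *
    (Real.exp x *
        ∑ l ∈ Finset.range (n + 1),
          (-1 : ℝ) ^ l * (Nat.factorial (n + l) : ℝ) /
            ((Nat.factorial l : ℝ) * (Nat.factorial (n - l) : ℝ) * (2 * x) ^ l)
      + (-1 : ℝ) ^ (n + 1) * Real.exp (-x) *
        ∑ l ∈ Finset.range (n + 1),
          (Nat.factorial (n + l) : ℝ) /
            ((Nat.factorial l : ℝ) * (Nat.factorial (n - l) : ℝ) * (2 * x) ^ l))

noncomputable def dd (n l : ℕ) : ℝ :=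
  (Nat.factorial (n + l) : ℝ) / ((Nat.factorial l : ℝ) * (Nat.factorial (n - l) : ℝ))

noncomputable def Pk (n : ℕ) (x : ℝ) : ℝ :=
  ∑ l ∈ Finset.range (n + 1), dd n l * ((2 * x)⁻¹) ^ l

noncomputable def Pd (n : ℕ) (x : ℝ) : ℝ :=
  ∑ l ∈ Finset.range (n + 1), (-(2 * (l : ℝ))) * dd n l * ((2 * x)⁻¹) ^ (l + 1)

noncomputable def Qk (n : ℕ) (x : ℝ) : ℝ :=
  ∑ l ∈ Finset.range (n + 1), dd n l * (2:ℝ)⁻¹ ^ l * x ^ (n - l)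

lemma dd_pos (n l : ℕ) : 0 < dd n l := by
  unfold dd
  positivity

lemma Pk_pos (n : ℕ) {x : ℝ} (hx : 0 < x) : 0 < Pk n x := by
  unfold Pk
  apply Finset.sum_pos
  · intro l _
    have := dd_pos n l
    positivity
  · exact ⟨0, by simp⟩

lemma sum_eq_Pk (n : ℕ) (x : ℝ) :
    (∑ l ∈ Finset.range (n + 1),
      (Nat.factorial (n + l) : ℝ) /
        ((Nat.factorial l : ℝ) * (Nat.factorial (n - l) : ℝ) * (2 * x) ^ l)) = Pk n x := by
  unfold Pk dd
  refine Finset.sum_congr rfl fun l _ => ?_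
  rw [inv_pow, ← div_div, div_eq_mul_inv]

lemma kBes_eq (n : ℕ) (x : ℝ) : kBes n x = Real.exp (-x) / x * Pk n x := by
  unfold kBes
  rw [sum_eq_Pk]

lemma Pk_neg_eq (n : ℕ) (x : ℝ) :
    (∑ l ∈ Finset.range (n + 1),
      (-1 : ℝ) ^ l * (Nat.factorial (n + l) : ℝ) /
        ((Nat.factorial l : ℝ) * (Nat.factorial (n - l) : ℝ) * (2 * x) ^ l)) = Pk n (-x) := by
  unfold Pk dd
  refine Finset.sum_congr rfl fun l _ => ?_
  rcases eq_or_ne x 0 with rfl | hx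
  · rcases Nat.eq_zero_or_pos l with rfl | hl
    · simp
    · simp [zero_pow hl.ne']
  · rw [mul_neg, inv_neg]
    conv_rhs => rw [neg_pow, inv_pow]
    have ht : (2 * x) ^ l ≠ 0 := pow_ne_zero _ (by simpa using hx)
    field_simp

lemma iBes_eq (n : ℕ) (x : ℝ) : iBes n x
    = (1 / (2 * x)) * (Real.exp x * Pk n (-x) + (-1 : ℝ) ^ (n + 1) * Real.exp (-x) * Pk n x) := by
  unfold iBes
  rw [sum_eq_Pk, Pk_neg_eq]



lemma dd_zero (n : ℕ) : dd n 0 = 1 := by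
  simp only [dd, Nat.add_zero, Nat.sub_zero, Nat.factorial_zero, Nat.cast_one, one_mul]
  exact div_self (Nat.cast_ne_zero.2 (Nat.factorial_ne_zero n))

lemma dd_step (n l : ℕ) (h : l < n) :
    dd (n+1) (l+1) = dd n (l+1) + 2*((n:ℝ)+1+(l:ℝ)) * dd n l := by
  obtain ⟨k, rfl⟩ : ∃ k, n = l + 1 + k := ⟨n - (l+1), by omega⟩
  unfold dd
  rw [show l + 1 + k + 1 + (l + 1) = 2*l+k+1+1+1 by omega,
      show l + 1 + k + (l+1) = 2*l+k+1+1 by omega,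
      show l + 1 + k + l = 2*l+k+1 by omega,
      show l + 1 + k + 1 - (l+1) = k + 1 by omega,
      show l + 1 + k - (l+1) = k by omega,
      show l + 1 + k - l = k + 1 by omega]
  simp only [Nat.factorial_succ]
  have h1 : ((Nat.factorial (2*l+k) : ℝ)) ≠ 0 := Nat.cast_ne_zero.2 (Nat.factorial_ne_zero _)
  have h2 : ((Nat.factorial l : ℝ)) ≠ 0 := Nat.cast_ne_zero.2 (Nat.factorial_ne_zero _)
  have h3 : ((Nat.factorial k : ℝ)) ≠ 0 := Nat.cast_ne_zero.2 (Nat.factorial_ne_zero _)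
  push_cast
  field_simp
  ring

lemma dd_top (n : ℕ) : dd (n+1) (n+1) = 2*(2*(n:ℝ)+1) * dd n n := by
  unfold dd
  rw [show n + 1 + (n + 1) = 2*n+1+1 by omega,
      show n + n = 2*n by omega,
      show n + 1 - (n+1) = 0 by omega, show n - n = 0 by omega]
  simp only [Nat.factorial_succ]
  have h1 : ((Nat.factorial (2*n) : ℝ)) ≠ 0 := Nat.cast_ne_zero.2 (Nat.factorial_ne_zero _)
  have h2 : ((Nat.factorial n : ℝ)) ≠ 0 := Nat.cast_ne_zero.2 (Nat.factorial_ne_zero _)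
  push_cast
  field_simp
  ring

lemma dd_step3 (n l : ℕ) (h : l < n) :
    dd (n+2) (l+1) = dd n (l+1) + 2*(2*(n:ℝ)+3) * dd (n+1) l := by
  obtain ⟨k, rfl⟩ : ∃ k, n = l + 1 + k := ⟨n - (l+1), by omega⟩
  unfold dd
  rw [show l + 1 + k + 2 + (l + 1) = 2*l+k+1+1+1+1 by omega,
      show l + 1 + k + (l+1) = 2*l+k+1+1 by omega,
      show l + 1 + k + 1 + l = 2*l+k+1+1 by omega,
      show l + 1 + k + 2 - (l+1) = k+1+1 by omega,
      show l + 1 + k - (l+1) = k by omega,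
      show l + 1 + k + 1 - l = k+1+1 by omega]
  simp only [Nat.factorial_succ]
  have h1 : ((Nat.factorial (2*l+k) : ℝ)) ≠ 0 := Nat.cast_ne_zero.2 (Nat.factorial_ne_zero _)
  have h2 : ((Nat.factorial l : ℝ)) ≠ 0 := Nat.cast_ne_zero.2 (Nat.factorial_ne_zero _)
  have h3 : ((Nat.factorial k : ℝ)) ≠ 0 := Nat.cast_ne_zero.2 (Nat.factorial_ne_zero _)
  push_cast
  field_simp
  ring

lemma dd_top3 (n : ℕ) : dd (n+2) (n+1) = 2*(2*(n:ℝ)+3) * dd (n+1) n := by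
  unfold dd
  rw [show n + 2 + (n + 1) = 2*n+1+1+1 by omega,
      show n + 1 + n = 2*n+1 by omega,
      show n + 2 - (n+1) = 1 by omega, show n + 1 - n = 1 by omega]
  simp only [Nat.factorial_succ, Nat.factorial_one]
  have h1 : ((Nat.factorial (2*n) : ℝ)) ≠ 0 := Nat.cast_ne_zero.2 (Nat.factorial_ne_zero _)
  have h2 : ((Nat.factorial n : ℝ)) ≠ 0 := Nat.cast_ne_zero.2 (Nat.factorial_ne_zero _)
  push_cast
  field_simp
  ring




lemma Ia (n : ℕ) {x : ℝ} (hx : x ≠ 0) :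
    Pk (n+1) x = (1 + ((n:ℝ)+1)/x) * Pk n x - Pd n x := by
  have hinv : ((n:ℝ)+1)/x = 2*((n:ℝ)+1) * (2*x)⁻¹ := by
    field_simp
  have hR : (1 + ((n:ℝ)+1)/x) * Pk n x - Pd n x
      = (∑ l ∈ Finset.range (n+1), dd n l * ((2*x)⁻¹)^l)
        + ∑ l ∈ Finset.range (n+1), 2*((n:ℝ)+1+(l:ℝ)) * dd n l * ((2*x)⁻¹)^(l+1) := by
    unfold Pk Pd
    rw [Finset.mul_sum, ← Finset.sum_sub_distrib, ← Finset.sum_add_distrib]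
    refine Finset.sum_congr rfl fun l _ => ?_
    rw [hinv]
    ring
  rw [hR]
  show (∑ l ∈ Finset.range (n+1+1), dd (n+1) l * ((2*x)⁻¹)^l) = _
  rw [Finset.sum_range_succ' (fun l => dd (n+1) l * ((2*x)⁻¹)^l) (n+1),
      Finset.sum_range_succ (fun l => dd (n+1) (l+1) * ((2*x)⁻¹)^(l+1)) n,
      Finset.sum_range_succ' (fun l => dd n l * ((2*x)⁻¹)^l) n,
      Finset.sum_range_succ (fun l => 2*((n:ℝ)+1+(l:ℝ)) * dd n l * ((2*x)⁻¹)^(l+1)) n]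
  have hmid : ∑ l ∈ Finset.range n, dd (n+1) (l+1) * ((2*x)⁻¹)^(l+1)
      = (∑ l ∈ Finset.range n, dd n (l+1) * ((2*x)⁻¹)^(l+1))
        + ∑ l ∈ Finset.range n, 2*((n:ℝ)+1+(l:ℝ)) * dd n l * ((2*x)⁻¹)^(l+1) := by
    rw [← Finset.sum_add_distrib]
    refine Finset.sum_congr rfl fun l hl => ?_
    rw [dd_step n l (Finset.mem_range.1 hl)]
    ring
  rw [hmid, dd_top n, dd_zero, dd_zero]
  push_cast
  ring

lemma Ic (n : ℕ) {x : ℝ} (hx : x ≠ 0) :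
    Pk (n+2) x = Pk n x + (2*(n:ℝ)+3)/x * Pk (n+1) x := by
  have hinv : (2*(n:ℝ)+3)/x = 2*(2*(n:ℝ)+3) * (2*x)⁻¹ := by
    field_simp
  have hR : (2*(n:ℝ)+3)/x * Pk (n+1) x
      = ∑ l ∈ Finset.range (n+2), 2*(2*(n:ℝ)+3) * dd (n+1) l * ((2*x)⁻¹)^(l+1) := by
    unfold Pk
    rw [Finset.mul_sum]
    refine Finset.sum_congr rfl fun l _ => ?_
    rw [hinv]
    ring
  rw [hR]
  show (∑ l ∈ Finset.range (n+2+1), dd (n+2) l * ((2*x)⁻¹)^l) = _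
  rw [Finset.sum_range_succ (fun l => dd (n+2) l * ((2*x)⁻¹)^l) (n+2),
      Finset.sum_range_succ (fun l => dd (n+2) l * ((2*x)⁻¹)^l) (n+1),
      Finset.sum_range_succ' (fun l => dd (n+2) l * ((2*x)⁻¹)^l) n,
      Finset.sum_range_succ (fun l => 2*(2*(n:ℝ)+3) * dd (n+1) l * ((2*x)⁻¹)^(l+1)) (n+1),
      Finset.sum_range_succ (fun l => 2*(2*(n:ℝ)+3) * dd (n+1) l * ((2*x)⁻¹)^(l+1)) n]
  show _ = (∑ l ∈ Finset.range (n+1), dd n l * ((2*x)⁻¹)^l) + _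
  rw [Finset.sum_range_succ' (fun l => dd n l * ((2*x)⁻¹)^l) n]
  have hmid : ∑ l ∈ Finset.range n, dd (n+2) (l+1) * ((2*x)⁻¹)^(l+1)
      = (∑ l ∈ Finset.range n, dd n (l+1) * ((2*x)⁻¹)^(l+1))
        + ∑ l ∈ Finset.range n, 2*(2*(n:ℝ)+3) * dd (n+1) l * ((2*x)⁻¹)^(l+1) := by
    rw [← Finset.sum_add_distrib]
    refine Finset.sum_congr rfl fun l hl => ?_
    rw [dd_step3 n l (Finset.mem_range.1 hl)]
    ring
  rw [hmid, dd_top3 n, dd_zero, dd_zero,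
      show n+2 = (n+1)+1 from rfl, dd_top (n+1)]
  push_cast
  ring




lemma Pk_zero' (x : ℝ) : Pk 0 x = 1 := by
  simp [Pk, dd_zero]

lemma Pk_one (x : ℝ) : Pk 1 x = 1 + 2 * (2*x)⁻¹ := by
  have h : dd 1 1 = 2 := by norm_num [dd, Nat.factorial]
  simp [Pk, Finset.sum_range_succ, dd_zero, h]

lemma cross (n : ℕ) {x : ℝ} (hx : x ≠ 0) :
    Pk n (-x) * Pk (n+1) x + Pk (n+1) (-x) * Pk n x = 2 := by
  induction n with
  | zero =>
    rw [Pk_zero', Pk_zero', Pk_one, Pk_one]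
    have h2x : (2:ℝ)*x ≠ 0 := by simpa using hx
    field_simp
    ring
  | succ n ih =>
    have h1 := Ic n hx
    have h2 := Ic n (neg_ne_zero.2 hx)
    rw [div_neg] at h2
    show Pk (n+1) (-x) * Pk (n+2) x + Pk (n+2) (-x) * Pk (n+1) x = 2
    rw [h1, h2]
    linear_combination ih

lemma Wid (n : ℕ) {x : ℝ} (hx : x ≠ 0) :
    2 * Pk n (-x) * Pk n x - Pd n (-x) * Pk n x - Pk n (-x) * Pd n x = 2 := by
  have h1 := Ia n hx
  have h2 := Ia n (neg_ne_zero.2 hx)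
  have h3 := cross n hx
  rw [div_neg] at h2
  linear_combination (-(Pk n (-x))) * h1 + (-(Pk n x)) * h2 + h3

lemma hasDerivAt_Pk (n : ℕ) {x : ℝ} (hx : x ≠ 0) :
    HasDerivAt (fun y => Pk n y) (Pd n x) x := by
  have h2x : (2:ℝ)*x ≠ 0 := by simpa using hx
  unfold Pk Pd
  apply HasDerivAt.fun_sum
  intro l _
  have hy : HasDerivAt (fun y : ℝ => 2*y) 2 x := by
    simpa using (hasDerivAt_id x).const_mul (2:ℝ)
  have hinv : HasDerivAt (fun y : ℝ => (2*y)⁻¹) (-2 / (2*x)^2) x := hy.inv h2x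
  have hpow : HasDerivAt (fun y : ℝ => ((2*y)⁻¹)^l)
      ((l:ℝ) * ((2*x)⁻¹)^(l-1) * (-2 / (2*x)^2)) x := hinv.pow l
  have := hpow.const_mul (dd n l)
  convert this using 1
  · rfl
  rcases Nat.eq_zero_or_pos l with rfl | hl
  · simp
  · obtain ⟨m, rfl⟩ : ∃ m, l = m + 1 := ⟨l - 1, by omega⟩
    simp only [Nat.add_sub_cancel]
    field_simp
    rw [show (1/(2*x))^(m+1+1) = (1/(2*x))^m * (1/(2*x))^2 by ring]
    field_simp

lemma hasDerivAt_F (n : ℕ) {x : ℝ} (hx : 0 < x) :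
    HasDerivAt (fun y => Real.exp (2*y) * Pk n (-y) / Pk n y)
      (2 * Real.exp (2*x) / (Pk n x)^2) x := by
  have hx0 : x ≠ 0 := ne_of_gt hx
  have hB : Pk n x ≠ 0 := (Pk_pos n hx).ne'
  have h1 : HasDerivAt (fun y : ℝ => 2*y) 2 x := by
    simpa using (hasDerivAt_id x).const_mul (2:ℝ)
  have he : HasDerivAt (fun y : ℝ => Real.exp (2*y)) (2 * Real.exp (2*x)) x := by
    simpa [mul_comm] using h1.exp
  have hA : HasDerivAt (fun y => Pk n (-y)) (-(Pd n (-x))) x := by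
    have h := (hasDerivAt_Pk n (neg_ne_zero.2 hx0)).comp x (hasDerivAt_neg x)
    simpa [mul_comm, Function.comp_def] using h
  have hBd : HasDerivAt (fun y => Pk n y) (Pd n x) x := hasDerivAt_Pk n hx0
  have hnum : HasDerivAt (fun y => Real.exp (2*y) * Pk n (-y))
      (2*Real.exp (2*x) * Pk n (-x) + Real.exp (2*x) * (-(Pd n (-x)))) x := he.mul hA
  have hdiv := hnum.div hBd hB
  have hW := Wid n hx0
  have hval : ((2*Real.exp (2*x) * Pk n (-x) + Real.exp (2*x) * (-(Pd n (-x)))) * Pk n x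
      - Real.exp (2*x) * Pk n (-x) * Pd n x) / Pk n x ^ 2
      = 2 * Real.exp (2*x) / (Pk n x)^2 := by
    rw [show (2*Real.exp (2*x) * Pk n (-x) + Real.exp (2*x) * (-(Pd n (-x)))) * Pk n x
      - Real.exp (2*x) * Pk n (-x) * Pd n x = 2 * Real.exp (2*x) from by
        linear_combination Real.exp (2*x) * hW]
  rwa [hval] at hdiv




lemma Pk_eq_Qk (n : ℕ) {x : ℝ} (hx : x ≠ 0) : Pk n x = Qk n x / x^n := by
  unfold Pk Qk
  rw [Finset.sum_div]
  refine Finset.sum_congr rfl fun l hl => ?_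
  have hln : l ≤ n := Nat.lt_succ_iff.1 (Finset.mem_range.1 hl)
  have hxn : x^n = x^(n-l) * x^l := by
    rw [← pow_add]
    congr 1
    omega
  rw [hxn, mul_inv, mul_pow]
  have hxl : x^l ≠ 0 := pow_ne_zero _ hx
  have hxnl : x^(n-l) ≠ 0 := pow_ne_zero _ hx
  field_simp
  rw [one_div, inv_pow, mul_assoc, inv_mul_cancel₀ hxl, mul_one]

lemma Qk_cont (n : ℕ) : Continuous (fun x => Qk n x) := by
  unfold Qk
  exact continuous_finset_sum _ fun l _ => (continuous_const.mul (continuous_pow _))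

lemma Qk_at_zero (n : ℕ) : Qk n 0 = dd n n * (2:ℝ)⁻¹ ^ n := by
  unfold Qk
  rw [Finset.sum_range_succ]
  have h0 : ∀ l ∈ Finset.range n, dd n l * (2:ℝ)⁻¹ ^ l * (0:ℝ) ^ (n - l) = 0 := by
    intro l hl
    have : n - l ≠ 0 := by
      have := Finset.mem_range.1 hl
      omega
    rw [zero_pow this, mul_zero]
  rw [Finset.sum_eq_zero h0]
  simp

lemma Qk_pos_at_zero (n : ℕ) : 0 < Qk n 0 := by
  rw [Qk_at_zero]
  have := dd_pos n n
  positivity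

lemma F_tendsto (n : ℕ) :
    Filter.Tendsto (fun x => Real.exp (2*x) * Pk n (-x) / Pk n x)
      (nhdsWithin 0 (Set.Ioi 0)) (nhds ((-1:ℝ)^n)) := by
  have hc : Filter.Tendsto (fun x => Real.exp (2*x) * ((-1:ℝ)^n * Qk n (-x) / Qk n x))
      (nhds (0:ℝ)) (nhds ((-1:ℝ)^n)) := by
    have hQ : Qk n 0 ≠ 0 := (Qk_pos_at_zero n).ne'
    have hcont : ContinuousAt (fun x => Real.exp (2*x) * ((-1:ℝ)^n * Qk n (-x) / Qk n x)) 0 := by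
      apply ContinuousAt.mul
      · exact (Real.continuous_exp.comp (continuous_const.mul continuous_id)).continuousAt
      · exact ((continuous_const.mul ((Qk_cont n).comp continuous_neg)).continuousAt).div
          (Qk_cont n).continuousAt hQ
    have := hcont.tendsto
    simpa [hQ] using this
  refine Filter.Tendsto.congr' ?_ (hc.mono_left nhdsWithin_le_nhds)
  filter_upwards [self_mem_nhdsWithin] with x hx
  have hx0 : (0:ℝ) < x := hx
  have hxne : x ≠ 0 := ne_of_gt hx0
  have hQx : Qk n x ≠ 0 := by
    have := Pk_pos n hx0
    rw [Pk_eq_Qk n hxne] at this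
    intro h
    rw [h] at this
    simp at this
  rw [Pk_eq_Qk n hxne, Pk_eq_Qk n (neg_ne_zero.2 hxne)]
  rw [show (-x)^n = (-1:ℝ)^n * x^n from by rw [neg_pow]]
  have hxn : (x:ℝ)^n ≠ 0 := pow_ne_zero _ hxne
  have hs : ((-1:ℝ)^n) ≠ 0 := pow_ne_zero _ (by norm_num)
  field_simp
  have hsq : ((-1:ℝ)^n) * ((-1:ℝ)^n) = 1 := by
    rw [← pow_add]
    rw [show n + n = 2*n by omega, pow_mul]
    norm_num
  linear_combination (Qk n (-x)) * hsq

lemma F_lt (n : ℕ) {x : ℝ} (hx : 0 < x) :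
    (-1:ℝ)^n < Real.exp (2*x) * Pk n (-x) / Pk n x := by
  set F := fun y => Real.exp (2*y) * Pk n (-y) / Pk n y with hF
  have hmono : StrictMonoOn F (Set.Ioi 0) := by
    apply strictMonoOn_of_deriv_pos (convex_Ioi 0)
    · intro y hy
      exact (hasDerivAt_F n hy).continuousAt.continuousWithinAt
    · intro y hy
      rw [interior_Ioi] at hy
      rw [(hasDerivAt_F n hy).deriv]
      have := Pk_pos n hy
      positivity
  have hhalf : 0 < x/2 := by linarith
  have h1 : (-1:ℝ)^n ≤ F (x/2) := by
    refine le_of_tendsto (F_tendsto n) ?_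
    filter_upwards [Ioo_mem_nhdsGT_of_mem (Set.left_mem_Ico.2 hhalf)] with y hy
    exact (hmono (Set.mem_Ioi.2 hy.1) (Set.mem_Ioi.2 hhalf) hy.2).le
  have h2 : F (x/2) < F x := hmono (Set.mem_Ioi.2 hhalf) (Set.mem_Ioi.2 hx) (by linarith)
  exact lt_of_le_of_lt h1 h2

lemma inner_pos (n : ℕ) {x : ℝ} (hx : 0 < x) :
    0 < Real.exp x * Pk n (-x) + (-1:ℝ)^(n+1) * Real.exp (-x) * Pk n x := by
  have hB := Pk_pos n hx
  have hF := F_lt n hx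
  rw [lt_div_iff₀ hB] at hF
  have hexp : 0 < Real.exp (-x) := Real.exp_pos _
  have key : (-1:ℝ)^n * Real.exp (-x) * Pk n x < Real.exp x * Pk n (-x) := by
    have := mul_lt_mul_of_pos_right hF hexp
    calc (-1:ℝ)^n * Real.exp (-x) * Pk n x = ((-1:ℝ)^n * Pk n x) * Real.exp (-x) := by ring
    _ < (Real.exp (2*x) * Pk n (-x)) * Real.exp (-x) := this
    _ = Real.exp x * Pk n (-x) := by
        rw [mul_comm (Real.exp (2*x)) (Pk n (-x)), mul_assoc, ← Real.exp_add]
        ring_nf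
  have hsign : (-1:ℝ)^(n+1) = -(-1:ℝ)^n := by rw [pow_succ]; ring
  rw [hsign]
  nlinarith [key]





lemma step_low (n S1 P0 P1 x : ℝ) (hx : 0 < x) (hP0 : 0 < P0) (hP1 : 0 < P1)
    (hS1 : S1^2 = (n+1)^2+x^2) (hS1n : n+1 ≤ S1)
    (ihr : x*P1 ≤ (n+1+S1)*P0) : (n+2+S1)*P1 ≤ x*P0 + (2*n+3)*P1 := by
  have h1 : (S1-(n+1)) * (x*P1) ≤ (S1-(n+1))*((n+1+S1)*P0) :=
    mul_le_mul_of_nonneg_left ihr (by linarith)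
  have h2 : (S1-(n+1))*((n+1+S1)*P0) = x^2*P0 := by linear_combination P0 * hS1
  nlinarith [h1, h2, hx, hP1, hP0]

lemma step_up (n S0 S2 P0 P1 x : ℝ) (hn : 0 ≤ n) (hx : 0 < x) (hP0 : 0 < P0) (hP1 : 0 < P1)
    (hS0 : S0^2 = n^2+x^2) (hS2 : S2^2 = (n+2)^2+x^2) (hS0n : n ≤ S0) (hS0x : x ≤ S0)
    (hS0nn : 0 ≤ S0) (hS2nn : 0 ≤ S2) (hS2n : n+2 ≤ S2)
    (ihl : (n+1+S0)*P0 ≤ x*P1) : x*P0 + (2*n+3)*P1 ≤ (n+2+S2)*P1 := by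
  have hS2S0 : S2 ≤ S0 + 2 := by nlinarith [hS0n, hS2nn, hS0nn]
  have h5 : (2*n+1)*(S2+S0) ≤ (4*n+4)*(S0+n+1) := by
    nlinarith [mul_le_mul_of_nonneg_left hS2S0 (by linarith : (0:ℝ) ≤ 2*n+1), hS0nn, hn]
  have hstep : 2*n+1 ≤ (S0+n+1)*(S2-S0) := by
    have h4 : (S2-S0)*(S2+S0) = 4*n+4 := by linear_combination hS2 - hS0
    have hsum : 0 < S2+S0 := by nlinarith
    nlinarith [h4, h5, hsum]
  have halg : x^2 ≤ (S2-(n+1))*(n+1+S0) := by nlinarith [hstep, hS0]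
  have h1 : (S2-(n+1))*((n+1+S0)*P0) ≤ (S2-(n+1))*(x*P1) :=
    mul_le_mul_of_nonneg_left ihl (by linarith)
  have h2 : x^2*P0 ≤ (S2-(n+1))*((n+1+S0)*P0) := by nlinarith [halg, hP0]
  nlinarith [h1, h2, hx, hP0, hP1]

lemma kappa (n : ℕ) {x : ℝ} (hx : 0 < x) :
    ((n:ℝ)+1+Real.sqrt ((n:ℝ)^2+x^2)) * Pk n x ≤ x * Pk (n+1) x ∧
    x * Pk (n+1) x ≤ ((n:ℝ)+1+Real.sqrt (((n:ℝ)+1)^2+x^2)) * Pk n x := by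
  induction n with
  | zero =>
    have hx1 : x * Pk 1 x = x + 1 := by
      rw [Pk_one]
      field_simp
    have hs0 : Real.sqrt ((0:ℝ)^2+x^2) = x := by
      rw [show ((0:ℝ):ℝ)^2+x^2 = x^2 by norm_num, Real.sqrt_sq hx.le]
    have hs1 : x ≤ Real.sqrt (((0:ℝ)+1)^2+x^2) := by
      apply Real.le_sqrt_of_sq_le
      nlinarith
    constructor
    · rw [Pk_zero', hx1]
      push_cast
      rw [hs0]
      linarith
    · rw [Pk_zero', hx1]
      push_cast
      nlinarith [hs1]
  | succ n ih =>
    obtain ⟨ihl, ihr⟩ := ih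
    have hP0 := Pk_pos n hx
    have hP1 := Pk_pos (n+1) hx
    have hP2 := Pk_pos (n+2) hx
    have hrec : x * Pk (n+2) x = x * Pk n x + (2*(n:ℝ)+3) * Pk (n+1) x := by
      rw [Ic n hx.ne']
      field_simp
    have hS0 : (Real.sqrt ((n:ℝ)^2+x^2))^2 = (n:ℝ)^2+x^2 := Real.sq_sqrt (by positivity)
    have hS1 : (Real.sqrt (((n:ℝ)+1)^2+x^2))^2 = ((n:ℝ)+1)^2+x^2 := Real.sq_sqrt (by positivity)
    have hS2 : (Real.sqrt (((n:ℝ)+2)^2+x^2))^2 = ((n:ℝ)+2)^2+x^2 := Real.sq_sqrt (by positivity)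
    have hS0n : (n:ℝ) ≤ Real.sqrt ((n:ℝ)^2+x^2) := Real.le_sqrt_of_sq_le (by nlinarith)
    have hS0x : x ≤ Real.sqrt ((n:ℝ)^2+x^2) := Real.le_sqrt_of_sq_le (by nlinarith [sq_nonneg (n:ℝ)])
    have hS1n : (n:ℝ)+1 ≤ Real.sqrt (((n:ℝ)+1)^2+x^2) := Real.le_sqrt_of_sq_le (by nlinarith)
    have hS2n : (n:ℝ)+2 ≤ Real.sqrt (((n:ℝ)+2)^2+x^2) := Real.le_sqrt_of_sq_le (by nlinarith)
    constructor
    · push_cast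
      rw [show ((n:ℝ)+1)+1 = (n:ℝ)+2 by ring, hrec]
      have := step_low (n:ℝ) (Real.sqrt (((n:ℝ)+1)^2+x^2)) (Pk n x) (Pk (n+1) x) x
        hx hP0 hP1 hS1 hS1n ihr
      linarith
    · push_cast
      rw [show ((n:ℝ)+1)+1 = (n:ℝ)+2 by ring, hrec]
      have := step_up (n:ℝ) (Real.sqrt ((n:ℝ)^2+x^2)) (Real.sqrt (((n:ℝ)+2)^2+x^2))
        (Pk n x) (Pk (n+1) x) x (Nat.cast_nonneg n) hx hP0 hP1 hS0 hS2 hS0n hS0x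
        (Real.sqrt_nonneg _) (Real.sqrt_nonneg _) hS2n ihl
      linarith




lemma iBes_pos (n : ℕ) {x : ℝ} (hx : 0 < x) : 0 < iBes n x := by
  rw [iBes_eq]
  have := inner_pos n hx
  positivity

lemma iBes_rec (n : ℕ) {x : ℝ} (hx : 0 < x) :
    iBes (n+2) x = iBes n x - (2*(n:ℝ)+3)/x * iBes (n+1) x := by
  rw [iBes_eq, iBes_eq, iBes_eq, Ic n hx.ne', Ic n (neg_ne_zero.2 hx.ne'), div_neg]
  simp only [pow_succ]
  field_simp
  ring

lemma crude (n : ℕ) {x : ℝ} (hx : 0 < x) :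
    (2*(n:ℝ)+3) * iBes (n+1) x < x * iBes n x := by
  have h := iBes_rec n hx
  have h2 : x * iBes (n+2) x = x * iBes n x - (2*(n:ℝ)+3) * iBes (n+1) x := by
    rw [h]
    field_simp
  nlinarith [mul_pos hx (iBes_pos (n+2) hx)]

lemma star_ineq (n x S0 S2 : ℝ) (hn : 0 ≤ n) (hx : 0 < x)
    (hS0 : S0^2 = n^2+x^2) (hS2 : S2^2 = (n+2)^2+x^2)
    (hS0n : n ≤ S0) (hS0x : x ≤ S0) (hS2nn : 0 ≤ S2) (hS0S2 : S0 ≤ S2) :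
    x^2*(S2+n+4) ≤ (S0-n+1)*(x^2+(2*n+3)*(S2+n+4)) := by
  have hS0pos : 0 < S0 := lt_of_lt_of_le hx hS0x
  have key : S0*S2 ≤ S0^2 + (2*n+2) := by
    nlinarith [sq_nonneg (2*n+2), mul_nonneg hS0pos.le hS2nn, hS0, hS2]
  have stepA : x^2*(S0*S2) ≤ x^2*S0^2 + (2*n+2)*x*S0 := by
    nlinarith [mul_le_mul_of_nonneg_left key (by positivity : (0:ℝ) ≤ x^2),
      mul_le_mul_of_nonneg_left hS0x (by positivity : (0:ℝ) ≤ (2*n+2)*x)]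
  have hpos1 : 0 ≤ S0+1-n := by linarith
  have e1 : (S0+1-n)*(S0+n+4) = x^2+5*S0-3*n+4 := by linear_combination hS0
  have h6 : x^2+5*S0-3*n+4 ≤ (S0+1-n)*(S2+n+4) := by
    nlinarith [mul_le_mul_of_nonneg_left hS0S2 hpos1, e1]
  have c2 : (0:ℝ) ≤ (2*n+3)*S0 := by positivity
  have P2 := mul_le_mul_of_nonneg_left h6 c2
  have h2x : 2*x ≤ 5*S0-3*n+4 := by linarith
  have P3 := mul_le_mul_of_nonneg_left h2x c2
  have c4 : (0:ℝ) ≤ x*S0 := by positivity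
  have final0 : S0*(x^2*(S2+n+4)) ≤ S0*((S0-n+1)*(x^2+(2*n+3)*(S2+n+4))) := by
    nlinarith [stepA, P2, P3, c4, hx]
  exact le_of_mul_le_mul_left final0 hS0pos

lemma rho_step (n : ℕ) {x : ℝ} (hx : 0 < x)
    (ih : x * iBes (n+3) x < (Real.sqrt (((n:ℝ)+2)^2+x^2) - ((n:ℝ)+2) + 1) * iBes (n+2) x) :
    x * iBes (n+1) x < (Real.sqrt ((n:ℝ)^2+x^2) - (n:ℝ) + 1) * iBes n x := by
  set S0 := Real.sqrt ((n:ℝ)^2+x^2) with hS0def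
  set S2 := Real.sqrt (((n:ℝ)+2)^2+x^2) with hS2def
  have hS0 : S0^2 = (n:ℝ)^2+x^2 := Real.sq_sqrt (by positivity)
  have hS2 : S2^2 = ((n:ℝ)+2)^2+x^2 := Real.sq_sqrt (by positivity)
  have hS0n : (n:ℝ) ≤ S0 := Real.le_sqrt_of_sq_le (by nlinarith)
  have hS0x : x ≤ S0 := Real.le_sqrt_of_sq_le (by nlinarith [sq_nonneg (n:ℝ)])
  have hS2nn : 0 ≤ S2 := Real.sqrt_nonneg _
  have hS2n : (n:ℝ)+2 ≤ S2 := Real.le_sqrt_of_sq_le (by nlinarith)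
  have hS0S2 : S0 ≤ S2 := by
    apply Real.sqrt_le_sqrt
    nlinarith [Nat.cast_nonneg (α := ℝ) n]
  have hA := iBes_pos n hx
  have hB := iBes_pos (n+1) hx
  have hC := iBes_pos (n+2) hx
  have hD := iBes_pos (n+3) hx
  have h2 : x * iBes (n+1) x = x * iBes (n+3) x + (2*(n:ℝ)+5) * iBes (n+2) x := by
    have h := iBes_rec (n+1) hx
    rw [show n+1+2 = n+3 from rfl] at h
    rw [h]
    push_cast
    field_simp
    ring
  have h3 : x * iBes n x = x * iBes (n+2) x + (2*(n:ℝ)+3) * iBes (n+1) x := by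
    rw [iBes_rec n hx]
    field_simp
    ring
  have h4 : x * iBes (n+1) x < (S2+(n:ℝ)+4) * iBes (n+2) x := by nlinarith [ih, h2, hC]
  have star := star_ineq (n:ℝ) x S0 S2 (Nat.cast_nonneg n) hx hS0 hS2 hS0n hS0x hS2nn hS0S2
  have hpos0 : (0:ℝ) < S0-(n:ℝ)+1 := by linarith
  have h5 : x*(x*iBes (n+1) x) < x*((S2+(n:ℝ)+4) * iBes (n+2) x) := by nlinarith [h4, hx]
  have h6 : (S0-(n:ℝ)+1)*(x*(x*iBes (n+1) x)) < (S0-(n:ℝ)+1)*(x*((S2+(n:ℝ)+4) * iBes (n+2) x)) :=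
    mul_lt_mul_of_pos_left h5 hpos0
  have h7 : x^2*(S2+(n:ℝ)+4)*(iBes (n+1) x) ≤
      (S0-(n:ℝ)+1)*(x^2+(2*(n:ℝ)+3)*(S2+(n:ℝ)+4))*(iBes (n+1) x) :=
    mul_le_mul_of_nonneg_right star hB.le
  have h8 : (S0-(n:ℝ)+1)*(S2+(n:ℝ)+4)*(x*iBes n x)
      = (S0-(n:ℝ)+1)*(S2+(n:ℝ)+4)*(x * iBes (n+2) x + (2*(n:ℝ)+3) * iBes (n+1) x) := by
    rw [h3]
  have hT : (0:ℝ) < x*(S2+(n:ℝ)+4) := by positivity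
  have final : (x*(S2+(n:ℝ)+4))*(x * iBes (n+1) x) < (x*(S2+(n:ℝ)+4))*((S0-(n:ℝ)+1) * iBes n x) := by
    linarith [h6, h7, h8]
  exact lt_of_mul_lt_mul_left final hT.le




lemma rho_base (n : ℕ) {x : ℝ} (hx : 0 < x) (hc : x^2 ≤ 2*(n:ℝ)+3) :
    x * iBes (n+1) x < (Real.sqrt ((n:ℝ)^2+x^2) - (n:ℝ) + 1) * iBes n x := by
  have hS : (n:ℝ) ≤ Real.sqrt ((n:ℝ)^2+x^2) := Real.le_sqrt_of_sq_le (by nlinarith [sq_nonneg x])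
  have hcr := crude n hx
  have hA := iBes_pos n hx
  have hB := iBes_pos (n+1) hx
  nlinarith [hcr, hc, hS, hA, hB, hx,
    mul_nonneg (mul_nonneg (sub_nonneg.2 hS) hx.le) hA.le]

lemma rho (n : ℕ) {x : ℝ} (hx : 0 < x) :
    x * iBes (n+1) x < (Real.sqrt ((n:ℝ)^2+x^2) - (n:ℝ) + 1) * iBes n x := by
  obtain ⟨d, hd⟩ := exists_nat_ge (x^2)
  have main : ∀ m k : ℕ, x^2 ≤ 2*(k:ℝ)+3+2*(m:ℝ) →
      x * iBes (k+1) x < (Real.sqrt ((k:ℝ)^2+x^2) - (k:ℝ) + 1) * iBes k x := by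
    intro m
    induction m with
    | zero =>
      intro k h
      refine rho_base k hx ?_
      push_cast at h
      linarith
    | succ m ihm =>
      intro k h
      by_cases hc : x^2 ≤ 2*(k:ℝ)+3
      · exact rho_base k hx hc
      · have h2 := ihm (k+2) (by push_cast at h ⊢; linarith)
        push_cast at h2
        exact rho_step k hx h2
  exact main d n (by linarith [Nat.cast_nonneg (α := ℝ) n])

/-- For every integer `n ≥ 0` and every real `x > 0`, the quantity
`ϝ_n(x) = 2n/x + i_{n+1}(x)/i_n(x) − k_{n+1}(x)/k_n(x)` is strictly negative. -/
theorem digamma_neg (n : ℕ) (x : ℝ) (hx : 0 < x) :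
    2 * (n : ℝ) / x + iBes (n + 1) x / iBes n x - kBes (n + 1) x / kBes n x < 0 := by
  have hP0 := Pk_pos n hx
  have hP1 := Pk_pos (n+1) hx
  have hi0 := iBes_pos n hx
  have hi1 := iBes_pos (n+1) hx
  have hS0n : (n:ℝ) ≤ Real.sqrt ((n:ℝ)^2+x^2) := Real.le_sqrt_of_sq_le (by nlinarith [sq_nonneg x])
  have hkeq : kBes (n+1) x / kBes n x = Pk (n+1) x / Pk n x := by
    rw [kBes_eq, kBes_eq, mul_div_mul_left _ _ (div_ne_zero (Real.exp_ne_zero _) hx.ne')]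
  have hkge : ((n:ℝ)+1+Real.sqrt ((n:ℝ)^2+x^2))/x ≤ Pk (n+1) x / Pk n x := by
    rw [div_le_div_iff₀ hx hP0]
    have := (kappa n hx).1
    linarith
  have hilt : iBes (n+1) x / iBes n x < (Real.sqrt ((n:ℝ)^2+x^2)-(n:ℝ)+1)/x := by
    rw [div_lt_div_iff₀ hi0 hx]
    have := rho n hx
    linarith
  have hzero : 2*(n:ℝ)/x + (Real.sqrt ((n:ℝ)^2+x^2)-(n:ℝ)+1)/x
      - ((n:ℝ)+1+Real.sqrt ((n:ℝ)^2+x^2))/x = 0 := by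
    field_simp
    ring
  rw [hkeq]
  linarith [hkge, hilt, hzero]
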